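/- The subspace b₁⁺(H) + u₁(H) is dense in L₁(H) for the trace norm: for every trace-class operator a on H and every ε > 0 there exist b ∈ b₁⁺(H) and s ∈ u₁(H) with ‖a − b − s‖₁ < ε. Equivalently, the functionals Φ(b), b ∈ b₁⁺(H), form a dense subspace of the image of Φ : L₁(H) → u(H)* in the quotient norm of L₁(H)/u₁(H). -/

import Mathlib

/- Setting: `H` is a separable complex Hilbert space with a fixed orthonormal
(Hilbert) basis `e` indexed by `ℤ`. -/

set_option synthInstance.maxHeartbeats 1000000
set_option maxHeartbeats 2000000

noncomputable section
open ContinuousLinearMap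

namespace PL

variable {H : Type*} [NormedAddCommGroup H] [InnerProductSpace ℂ H] [CompleteSpace H]

/-- `A` is a bounded skew-hermitian operator: `A* = -A`. -/
def SkewHerm (A : H →L[ℂ] H) : Prop := star A = -A

/-- `A` is Hilbert–Schmidt: `∑ₙ ‖A eₙ‖² < ∞` (computed in the orthonormal basis `e`;
this is equivalent to the basis-free notion). -/
def IsHS (e : HilbertBasis ℤ ℂ H) (A : H →L[ℂ] H) : Prop :=
  Summable (fun n : ℤ => ‖A (e n)‖ ^ 2)

/-- The Hilbert–Schmidt norm `‖A‖₂`. -/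
def hsNorm (e : HilbertBasis ℤ ℂ H) (A : H →L[ℂ] H) : ℝ :=
  Real.sqrt (∑' n : ℤ, ‖A (e n)‖ ^ 2)

/-- The absolute value `|A| = √(A* A)` of a bounded operator, via the continuous
functional calculus. -/
def absCLM (A : H →L[ℂ] H) : H →L[ℂ] H := CFC.sqrt (star A * A)

/-- `A` is trace class: `Tr |A| = ∑ₙ ⟨eₙ, |A| eₙ⟩ < ∞`. -/
def IsTC (e : HilbertBasis ℤ ℂ H) (A : H →L[ℂ] H) : Prop :=
  Summable (fun n : ℤ => (inner ℂ (e n) (absCLM A (e n)) : ℂ).re)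

/-- The trace norm `‖A‖₁ = Tr |A|`. -/
def traceNorm (e : HilbertBasis ℤ ℂ H) (A : H →L[ℂ] H) : ℝ :=
  ∑' n : ℤ, (inner ℂ (e n) (absCLM A (e n)) : ℂ).re

/-- The trace of a (trace-class) operator: `Tr A = ∑ₙ ⟨eₙ, A eₙ⟩`. -/
def traceOp (e : HilbertBasis ℤ ℂ H) (A : H →L[ℂ] H) : ℂ :=
  ∑' n : ℤ, (inner ℂ (e n) (A (e n)) : ℂ)

/-- `A` is upper triangular: `⟨eₘ, A eₙ⟩ = 0` whenever `m < n`. -/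
def UpperTri (e : HilbertBasis ℤ ℂ H) (A : H →L[ℂ] H) : Prop :=
  ∀ m n : ℤ, m < n → (inner ℂ (e m) (A (e n)) : ℂ) = 0

/-- All diagonal entries `⟨eₙ, A eₙ⟩` of `A` are real. -/
def RealDiag (e : HilbertBasis ℤ ℂ H) (A : H →L[ℂ] H) : Prop :=
  ∀ n : ℤ, (inner ℂ (e n) (A (e n)) : ℂ).im = 0

/-- Membership in `b₁⁺(H)`: trace-class, upper triangular, real diagonal. -/
def InB1 (e : HilbertBasis ℤ ℂ H) (A : H →L[ℂ] H) : Prop :=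
  IsTC e A ∧ UpperTri e A ∧ RealDiag e A

/-- Membership in `u₁(H)`: trace-class and skew-hermitian. -/
def InU1 (e : HilbertBasis ℤ ℂ H) (A : H →L[ℂ] H) : Prop :=
  IsTC e A ∧ SkewHerm A

/-- Membership in `b₂⁺(H)`: Hilbert–Schmidt, upper triangular, real diagonal. -/
def InB2 (e : HilbertBasis ℤ ℂ H) (A : H →L[ℂ] H) : Prop :=
  IsHS e A ∧ UpperTri e A ∧ RealDiag e A

/-- Membership in `u₂(H)`: Hilbert–Schmidt and skew-hermitian. -/
def InU2 (e : HilbertBasis ℤ ℂ H) (A : H →L[ℂ] H) : Prop :=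
  IsHS e A ∧ SkewHerm A

/-! ### Auxiliary development -/

section Aux

local notation "⟪" x ", " y "⟫" => @inner ℂ _ _ x y

lemma inner_sa {A : H →L[ℂ] H} (h : IsSelfAdjoint A) (x y : H) :
    ⟪A x, y⟫ = ⟪x, A y⟫ := by
  nth_rewrite 1 [← h.adjoint_eq]
  exact adjoint_inner_left A y x

lemma absCLM_nonneg (T : H →L[ℂ] H) : (0:H →L[ℂ] H) ≤ absCLM T := CFC.sqrt_nonneg _

lemma absCLM_selfAdjoint (T : H →L[ℂ] H) : IsSelfAdjoint (absCLM T) :=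
  (absCLM_nonneg T).isSelfAdjoint

lemma absCLM_mul_self (T : H →L[ℂ] H) : absCLM T * absCLM T = star T * T := by
  have h := CFC.sq_sqrt (star T * T) (star_mul_self_nonneg T)
  rw [sq] at h; exact h

lemma inner_absCLM (T : H →L[ℂ] H) (x y : H) :
    ⟪absCLM T x, absCLM T y⟫ = ⟪T x, T y⟫ := by
  rw [inner_sa (absCLM_selfAdjoint T)]
  have h : absCLM T (absCLM T y) = (star T * T) y := by
    rw [← ContinuousLinearMap.mul_apply, absCLM_mul_self]
  rw [h, ContinuousLinearMap.mul_apply, star_eq_adjoint]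
  exact adjoint_inner_right T x (T y)

lemma norm_absCLM (T : H →L[ℂ] H) (x : H) : ‖absCLM T x‖ = ‖T x‖ := by
  have h := inner_absCLM T x x
  rw [inner_self_eq_norm_sq_to_K, inner_self_eq_norm_sq_to_K] at h
  have h' : (‖absCLM T x‖:ℝ)^2 = (‖T x‖:ℝ)^2 := by exact_mod_cast h
  nlinarith [norm_nonneg (absCLM T x), norm_nonneg (T x)]

def sqrtAbs (T : H →L[ℂ] H) : H →L[ℂ] H := CFC.sqrt (absCLM T)

lemma sqrtAbs_selfAdjoint (T : H →L[ℂ] H) : IsSelfAdjoint (sqrtAbs T) :=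
  (CFC.sqrt_nonneg (a := absCLM T)).isSelfAdjoint

lemma sqrtAbs_mul_self (T : H →L[ℂ] H) : sqrtAbs T * sqrtAbs T = absCLM T := by
  have h := CFC.sq_sqrt (absCLM T) (absCLM_nonneg T)
  rw [sq] at h; exact h

lemma sqrtAbs_apply_self (T : H →L[ℂ] H) (x : H) :
    sqrtAbs T (sqrtAbs T x) = absCLM T x := by
  rw [← ContinuousLinearMap.mul_apply, sqrtAbs_mul_self]

lemma diag_abs (T : H →L[ℂ] H) (x : H) :
    (⟪x, absCLM T x⟫:ℂ) = ((‖sqrtAbs T x‖^2 : ℝ) : ℂ) := by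
  rw [← sqrtAbs_apply_self, ← inner_sa (sqrtAbs_selfAdjoint T) x (sqrtAbs T x),
    inner_self_eq_norm_sq_to_K]
  norm_cast

lemma traceNorm_term (e : HilbertBasis ℤ ℂ H) (A : H →L[ℂ] H) (n : ℤ) :
    (⟪e n, absCLM A (e n)⟫:ℂ).re = ‖sqrtAbs A (e n)‖^2 := by
  rw [diag_abs]
  exact Complex.ofReal_re _

/-! #### Finite-rank projections and matrix operators -/

def projF (e : HilbertBasis ℤ ℂ H) (F : Finset ℤ) : H →L[ℂ] H :=
  ∑ i ∈ F, (innerSL ℂ (e i)).smulRight (e i)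

lemma projF_apply (e : HilbertBasis ℤ ℂ H) (F : Finset ℤ) (x : H) :
    projF e F x = ∑ i ∈ F, (⟪e i, x⟫:ℂ) • e i := by
  simp [projF]

lemma inner_basis (e : HilbertBasis ℤ ℂ H) (i j : ℤ) :
    (⟪e i, e j⟫:ℂ) = if i = j then 1 else 0 :=
  orthonormal_iff_ite.1 e.orthonormal i j

lemma projF_basis (e : HilbertBasis ℤ ℂ H) (F : Finset ℤ) (n : ℤ) :
    projF e F (e n) = if n ∈ F then e n else 0 := by
  rw [projF_apply]
  have h : ∀ i ∈ F, (⟪e i, e n⟫:ℂ) • e i = if i = n then e i else 0 := by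
    intro i _
    rw [inner_basis]
    split <;> simp
  rw [Finset.sum_congr rfl h, Finset.sum_ite_eq' F n (fun i => e i)]

lemma inner_projF (e : HilbertBasis ℤ ℂ H) (F : Finset ℤ) (x y : H) :
    ⟪projF e F x, y⟫ = ⟪x, projF e F y⟫ := by
  rw [projF_apply, projF_apply, sum_inner, inner_sum]
  refine Finset.sum_congr rfl fun i _ => ?_
  rw [inner_smul_left, inner_smul_right, ← inner_conj_symm x (e i)]
  ring

lemma projF_selfAdjoint (e : HilbertBasis ℤ ℂ H) (F : Finset ℤ) :
    IsSelfAdjoint (projF e F) := by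
  rw [IsSelfAdjoint, star_eq_adjoint]
  exact ((eq_adjoint_iff (projF e F) (projF e F)).2 (inner_projF e F)).symm

lemma projF_idem (e : HilbertBasis ℤ ℂ H) (F : Finset ℤ) (x : H) :
    projF e F (projF e F x) = projF e F x := by
  rw [projF_apply e F x, map_sum]
  refine Finset.sum_congr rfl fun i hi => ?_
  rw [map_smul, projF_basis, if_pos hi]

lemma projF_inner_self (e : HilbertBasis ℤ ℂ H) (F : Finset ℤ) (x : H) :
    ⟪projF e F x, x - projF e F x⟫ = 0 := by
  rw [inner_sub_right, inner_projF e F x (projF e F x), projF_idem,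
    inner_projF e F x x, sub_self]

lemma norm_projF_pyth (e : HilbertBasis ℤ ℂ H) (F : Finset ℤ) (x : H) :
    ‖projF e F x‖^2 + ‖x - projF e F x‖^2 = ‖x‖^2 := by
  have h := projF_inner_self e F x
  have h2 := @norm_add_sq ℂ _ _ _ _ (projF e F x) (x - projF e F x)
  rw [add_sub_cancel, h] at h2
  simp only [map_zero, mul_zero, add_zero] at h2
  linarith [h2]

lemma norm_sub_projF_le (e : HilbertBasis ℤ ℂ H) (F : Finset ℤ) (x : H) :
    ‖x - projF e F x‖ ≤ ‖x‖ := by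
  have h := norm_projF_pyth e F x
  nlinarith [norm_nonneg (projF e F x), norm_nonneg (x - projF e F x), norm_nonneg x]

lemma norm_projF_le (e : HilbertBasis ℤ ℂ H) (F : Finset ℤ) (x : H) :
    ‖projF e F x‖ ≤ ‖x‖ := by
  have h := norm_projF_pyth e F x
  nlinarith [norm_nonneg (projF e F x), norm_nonneg (x - projF e F x), norm_nonneg x]

lemma tendsto_projF (e : HilbertBasis ℤ ℂ H) (y : H) :
    Filter.Tendsto (fun F : Finset ℤ => ‖y - projF e F y‖) Filter.atTop (nhds 0) := by
  have h : Filter.Tendsto (fun F : Finset ℤ => projF e F y) Filter.atTop (nhds y) := by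
    have h0 := e.hasSum_repr y
    simp only [HasSum, e.repr_apply_apply] at h0
    refine h0.congr fun F => ?_
    rw [projF_apply]
  have h2 : Filter.Tendsto (fun F : Finset ℤ => y - projF e F y) Filter.atTop (nhds (y - y)) :=
    Filter.Tendsto.sub tendsto_const_nhds h
  rw [sub_self] at h2
  simpa using h2.norm

def matOp (e : HilbertBasis ℤ ℂ H) (F : Finset ℤ) (c : ℤ → ℤ → ℂ) : H →L[ℂ] H :=
  ∑ i ∈ F, ∑ j ∈ F, c i j • (innerSL ℂ (e j)).smulRight (e i)

lemma matOp_apply (e : HilbertBasis ℤ ℂ H) (F : Finset ℤ) (c : ℤ → ℤ → ℂ) (x : H) :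
    matOp e F c x = ∑ i ∈ F, ∑ j ∈ F, c i j • ((⟪e j, x⟫:ℂ) • e i) := by
  simp [matOp]

lemma matOp_basis (e : HilbertBasis ℤ ℂ H) (F : Finset ℤ) (c : ℤ → ℤ → ℂ) (n : ℤ) :
    matOp e F c (e n) = if n ∈ F then ∑ i ∈ F, c i n • e i else 0 := by
  rw [matOp_apply]
  have h : ∀ i ∈ F, ∑ j ∈ F, c i j • ((⟪e j, e n⟫:ℂ) • e i)
      = if n ∈ F then c i n • e i else 0 := by
    intro i _
    have h2 : ∀ j ∈ F, c i j • ((⟪e j, e n⟫:ℂ) • e i) = if j = n then c i j • e i else 0 := by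
      intro j _
      rw [inner_basis]
      split <;> simp
    rw [Finset.sum_congr rfl h2, Finset.sum_ite_eq' F n (fun j => c i j • e i)]
  rw [Finset.sum_congr rfl h]
  split <;> simp

lemma matOp_col_zero (e : HilbertBasis ℤ ℂ H) (F : Finset ℤ) (c : ℤ → ℤ → ℂ) (n : ℤ)
    (hn : n ∉ F) : matOp e F c (e n) = 0 := by
  rw [matOp_basis, if_neg hn]

lemma matOp_entry (e : HilbertBasis ℤ ℂ H) (F : Finset ℤ) (c : ℤ → ℤ → ℂ) (m n : ℤ) :
    (⟪e m, matOp e F c (e n)⟫:ℂ) = if m ∈ F ∧ n ∈ F then c m n else 0 := by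
  rw [matOp_basis]
  by_cases hn : n ∈ F
  · rw [if_pos hn, inner_sum]
    have h : ∀ i ∈ F, (⟪e m, c i n • e i⟫:ℂ) = if i = m then c i n else 0 := by
      intro i _
      rw [inner_smul_right, inner_basis]
      by_cases hmi : m = i
      · rw [if_pos hmi, if_pos hmi.symm, mul_one]
      · rw [if_neg hmi, if_neg (fun hcon => hmi hcon.symm), mul_zero]
    rw [Finset.sum_congr rfl h, Finset.sum_ite_eq' F m (fun i => c i n)]
    by_cases hm : m ∈ F <;> simp [hm, hn]
  · rw [if_neg hn, if_neg (by tauto)]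
    simp

lemma matOp_adjoint (e : HilbertBasis ℤ ℂ H) (F : Finset ℤ) (c : ℤ → ℤ → ℂ) :
    adjoint (matOp e F c) = matOp e F (fun i j => (starRingEnd ℂ) (c j i)) := by
  symm
  refine ((eq_adjoint_iff _ _).2 ?_)
  intro x y
  simp only [matOp_apply, sum_inner, inner_sum, inner_smul_left, inner_smul_right,
    Complex.conj_conj]
  rw [Finset.sum_comm]
  refine Finset.sum_congr rfl fun i _ => Finset.sum_congr rfl fun j _ => ?_
  rw [← inner_conj_symm x (e i)]
  ring

lemma matOp_neg (e : HilbertBasis ℤ ℂ H) (F : Finset ℤ) (c : ℤ → ℤ → ℂ) :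
    matOp e F (fun i j => -(c i j)) = - matOp e F c := by
  simp [matOp, Finset.sum_neg_distrib, neg_smul]

lemma isTC_of_cols (e : HilbertBasis ℤ ℂ H) (A : H →L[ℂ] H) (F : Finset ℤ)
    (h : ∀ n ∉ F, A (e n) = 0) : IsTC e A := by
  apply summable_of_ne_finset_zero (s := F)
  intro n hn
  have h0 : absCLM A (e n) = 0 := by
    have h1 := norm_absCLM A (e n)
    rw [h n hn] at h1
    simpa using h1
  simp [h0]

/-! #### Parseval and the Hilbert-Schmidt transpose identity -/

lemma parseval (e : HilbertBasis ℤ ℂ H) (v : H) :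
    HasSum (fun n : ℤ => ‖(⟪e n, v⟫:ℂ)‖^2) (‖v‖^2) := by
  have h := e.hasSum_inner_mul_inner v v
  have hterm : ∀ n : ℤ, (⟪v, e n⟫:ℂ) * (⟪e n, v⟫:ℂ) = ((‖(⟪e n, v⟫:ℂ)‖^2 : ℝ) : ℂ) := by
    intro n
    rw [← inner_conj_symm v (e n), RCLike.conj_mul]
    norm_cast
  have hv : (⟪v, v⟫:ℂ) = ((‖v‖^2 : ℝ):ℂ) := by
    rw [inner_self_eq_norm_sq_to_K]; norm_cast
  simp only [hterm, hv] at h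
  exact_mod_cast Complex.hasSum_ofReal.1 h

lemma tsum_sq_col_adjoint (e : HilbertBasis ℤ ℂ H) (X : H →L[ℂ] H) :
    ∑' n : ℤ, ENNReal.ofReal (‖X (e n)‖^2) = ∑' n : ℤ, ENNReal.ofReal (‖adjoint X (e n)‖^2) := by
  have key : ∀ (Y : H →L[ℂ] H) (n : ℤ), ENNReal.ofReal (‖Y (e n)‖^2)
      = ∑' m : ℤ, ENNReal.ofReal (‖(⟪e m, Y (e n)⟫:ℂ)‖^2) := by
    intro Y n
    have h := parseval e (Y (e n))
    rw [← h.tsum_eq, ENNReal.ofReal_tsum_of_nonneg (fun m => sq_nonneg _) h.summable]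
  calc ∑' n : ℤ, ENNReal.ofReal (‖X (e n)‖^2)
      = ∑' n : ℤ, ∑' m : ℤ, ENNReal.ofReal (‖(⟪e m, X (e n)⟫:ℂ)‖^2) := by
        simp only [key X]
    _ = ∑' m : ℤ, ∑' n : ℤ, ENNReal.ofReal (‖(⟪e m, X (e n)⟫:ℂ)‖^2) := ENNReal.tsum_comm
    _ = ∑' m : ℤ, ENNReal.ofReal (‖adjoint X (e m)‖^2) := by
        refine tsum_congr fun m => ?_
        rw [key (adjoint X) m]
        refine tsum_congr fun n => ?_
        congr 2
        rw [← adjoint_inner_left X (e n) (e m)]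
        exact (norm_inner_symm _ _).symm

lemma col_bound (e : HilbertBasis ℤ ℂ H) (X : H →L[ℂ] H) (g : ℤ → ℝ)
    (hg0 : ∀ n, 0 ≤ g n) (hcol : ∀ n, ‖adjoint X (e n)‖ ≤ g n)
    (hg : Summable (fun n => g n ^ 2)) :
    Summable (fun n : ℤ => ‖X (e n)‖^2) ∧ ∑' n : ℤ, ‖X (e n)‖^2 ≤ ∑' n : ℤ, g n ^ 2 := by
  have hle : ∀ n : ℤ, ENNReal.ofReal (‖adjoint X (e n)‖^2) ≤ ENNReal.ofReal (g n ^ 2) :=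
    fun n => ENNReal.ofReal_le_ofReal
      (by nlinarith [norm_nonneg (adjoint X (e n)), hcol n, hg0 n])
  have h1 : ∑' n : ℤ, ENNReal.ofReal (‖X (e n)‖^2) ≤ ENNReal.ofReal (∑' n : ℤ, g n ^ 2) := by
    rw [tsum_sq_col_adjoint e X, ENNReal.ofReal_tsum_of_nonneg (fun n => sq_nonneg _) hg]
    exact ENNReal.tsum_le_tsum hle
  have hfin : ∑' n : ℤ, ENNReal.ofReal (‖X (e n)‖^2) ≠ ⊤ :=
    (lt_of_le_of_lt h1 ENNReal.ofReal_lt_top).ne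
  have hsum : Summable (fun n : ℤ => ‖X (e n)‖^2) := by
    have h2 := ENNReal.summable_toReal hfin
    refine h2.congr fun n => ?_
    rw [ENNReal.toReal_ofReal (sq_nonneg _)]
  refine ⟨hsum, ?_⟩
  rw [← ENNReal.ofReal_tsum_of_nonneg (fun n => sq_nonneg _) hsum] at h1
  exact (ENNReal.ofReal_le_ofReal_iff (tsum_nonneg fun n => sq_nonneg _)).1 h1

/-! #### Polar decomposition -/

lemma exists_polar (T : H →L[ℂ] H) :
    ∃ V : H →L[ℂ] H, ‖V‖ ≤ 1 ∧ (∀ x, V (absCLM T x) = T x) ∧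
      (∀ x, adjoint V (T x) = absCLM T x) := by
  classical
  have hBn : ∀ x, ‖absCLM T x‖ = ‖T x‖ := norm_absCLM T
  have hinner : ∀ x y, ⟪absCLM T x, absCLM T y⟫ = ⟪T x, T y⟫ := inner_absCLM T
  set Bl := (absCLM T : H →ₗ[ℂ] H) with hBl
  set Tl := (T : H →ₗ[ℂ] H) with hTl
  have hker : LinearMap.ker Bl ≤ LinearMap.ker Tl := by
    intro x hx
    rw [LinearMap.mem_ker] at hx ⊢
    have h1 : ‖T x‖ = 0 := by
      rw [← hBn x]
      show ‖Bl x‖ = 0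
      rw [hx, norm_zero]
    have : Tl x = T x := rfl
    rw [this, ← norm_eq_zero]
    exact h1
  set R := LinearMap.range Bl with hR
  let φ0 : (H ⧸ LinearMap.ker Bl) →ₗ[ℂ] H := (LinearMap.ker Bl).liftQ Tl hker
  let eqv : (H ⧸ LinearMap.ker Bl) ≃ₗ[ℂ] R := Bl.quotKerEquivRange
  let φ : R →ₗ[ℂ] H := φ0 ∘ₗ (eqv.symm : R →ₗ[ℂ] H ⧸ LinearMap.ker Bl)
  have hmemR : ∀ x : H, absCLM T x ∈ R := fun x => LinearMap.mem_range_self Bl x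
  have hφ : ∀ x : H, φ ⟨absCLM T x, hmemR x⟩ = T x := by
    intro x
    have h1 : eqv (Submodule.Quotient.mk x) = ⟨absCLM T x, hmemR x⟩ := by
      apply Subtype.ext
      exact Bl.quotKerEquivRange_apply_mk x
    have h2 : eqv.symm ⟨absCLM T x, hmemR x⟩ = Submodule.Quotient.mk x := by
      rw [← h1, LinearEquiv.symm_apply_apply]
    show φ0 (eqv.symm ⟨absCLM T x, hmemR x⟩) = T x
    rw [h2]
    exact Submodule.liftQ_apply _ Tl x
  have hφn : ∀ y : R, ‖φ y‖ = ‖y‖ := by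
    rintro ⟨y, x, rfl⟩
    have h1 : (⟨Bl x, ⟨x, rfl⟩⟩ : R) = ⟨absCLM T x, hmemR x⟩ := rfl
    rw [h1, hφ x]
    show ‖T x‖ = ‖absCLM T x‖
    exact (hBn x).symm
  let φc : R →L[ℂ] H := LinearMap.mkContinuous φ 1 (fun y => by rw [hφn y, one_mul])
  have hφc_apply : ∀ y : R, φc y = φ y := fun y => rfl
  have hφc_norm : ‖φc‖ ≤ 1 := LinearMap.mkContinuous_norm_le φ zero_le_one _
  set K := R.topologicalClosure with hK
  have hRK : R ≤ K := Submodule.le_topologicalClosure R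
  let jl : R →ₗ[ℂ] K := Submodule.inclusion hRK
  let j : R →L[ℂ] K := LinearMap.mkContinuous jl 1 (fun y => by
    rw [one_mul]
    exact le_of_eq rfl)
  have hjval : ∀ y : R, ((j y : K) : H) = (y : H) := fun y => rfl
  have hjiso : ∀ y : R, ‖y‖ ≤ ((1:NNReal):ℝ) * ‖j y‖ := by
    intro y
    rw [NNReal.coe_one, one_mul]
    exact le_of_eq rfl
  have hdense : DenseRange j := by
    refine Topology.IsInducing.subtypeVal.dense_iff.2 fun x => ?_
    have hx : (x : H) ∈ closure (R : Set H) := x.prop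
    convert hx using 2
    rw [← Set.range_comp]
    exact Set.ext fun y =>
      ⟨by rintro ⟨y, rfl⟩; exact y.prop, fun hy => ⟨⟨y, hy⟩, rfl⟩⟩
  haveI : CompleteSpace K := Submodule.topologicalClosure.completeSpace R
  let Vk : K →L[ℂ] H :=
    φc.extend j
  have hVk_apply : ∀ y : R, Vk (j y) = φc y := fun y =>
    ContinuousLinearMap.extend_eq φc hdense
      (ContinuousLinearMap.isUniformEmbedding_of_bound j hjiso).isUniformInducing y
  have hVkn : ‖Vk‖ ≤ 1 := by
    have h := φc.opNorm_extend_le hdense (N := 1) hjiso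
    have h2 : ((1:NNReal):ℝ) * ‖φc‖ ≤ 1 := by
      rw [NNReal.coe_one, one_mul]; exact hφc_norm
    exact le_trans h h2
  let P : H →L[ℂ] K := K.orthogonalProjectionOnto
  refine ⟨Vk ∘L P, ?_, ?_, ?_⟩
  · calc ‖Vk ∘L P‖ ≤ ‖Vk‖ * ‖P‖ := opNorm_comp_le Vk P
    _ ≤ 1 * 1 := by
        apply mul_le_mul hVkn (Submodule.orthogonalProjectionOnto_norm_le (K := K))
          (norm_nonneg K.orthogonalProjectionOnto) zero_le_one
    _ = 1 := one_mul 1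
  · intro x
    have hmem : absCLM T x ∈ K := hRK (hmemR x)
    have hP : P (absCLM T x) = ⟨absCLM T x, hmem⟩ := by
      apply Subtype.ext
      exact (Submodule.starProjection_eq_self_iff (K := K)).2 hmem
    have hj : j ⟨absCLM T x, hmemR x⟩ = ⟨absCLM T x, hmem⟩ := rfl
    rw [ContinuousLinearMap.comp_apply, hP, ← hj, hVk_apply, hφc_apply, hφ]
  · intro x
    have claim : ∀ k : K, ⟪(k:H), absCLM T x⟫ = ⟪Vk k, T x⟫ := by
      intro k
      refine hdense.induction_on k ?_ ?_
      · apply isClosed_eq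
        · exact Continuous.inner continuous_subtype_val continuous_const
        · exact Continuous.inner (Vk.continuous.comp continuous_id) continuous_const
      · rintro ⟨y, z, rfl⟩
        have h1 : (⟨Bl z, ⟨z, rfl⟩⟩ : R) = ⟨absCLM T z, hmemR z⟩ := rfl
        rw [h1, hVk_apply, hφc_apply, hφ z]
        show ⟪absCLM T z, absCLM T x⟫ = ⟪T z, T x⟫
        exact hinner z x
    apply ext_inner_left ℂ
    intro v
    rw [adjoint_inner_right]
    have hdecomp : ⟪v, absCLM T x⟫ = ⟪((P v : K) : H), absCLM T x⟫ := by
      have horth : v - ((P v : K) : H) ∈ Kᗮ := Submodule.sub_starProjection_mem_orthogonal (K := K) v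
      have h0 : ⟪v - ((P v : K) : H), absCLM T x⟫ = 0 := by
        have hh := (Submodule.mem_orthogonal' K _).1 horth
        exact hh (absCLM T x) (hRK (hmemR x))
      have h2 : (⟪v - ((P v : K) : H), absCLM T x⟫:ℂ)
          = ⟪v, absCLM T x⟫ - ⟪((P v : K) : H), absCLM T x⟫ := inner_sub_left _ _ _
      rw [h0] at h2
      exact sub_eq_zero.1 h2.symm
    rw [ContinuousLinearMap.comp_apply]
    rw [← claim (P v)]
    exact hdecomp.symm

lemma amgm {d : ℝ} (hd : 0 < d) (A B : ℝ) : A*B ≤ A^2/(2*d) + d/2*B^2 := by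
  rw [← sub_nonneg]
  have h : A^2/(2*d) + d/2*B^2 - A*B = (A - d*B)^2/(2*d) := by
    field_simp
    ring
  rw [h]
  positivity

lemma re_inner_le_norm' (x y : H) : (⟪x, y⟫:ℂ).re ≤ ‖x‖ * ‖y‖ := by
  simpa using re_inner_le_norm (𝕜 := ℂ) x y


/-- `b₁⁺(H) + u₁(H)` is dense in `L₁(H)` for the trace norm: every
trace-class `a` is approximated within any `ε > 0` by a sum `b + s` with `b ∈ b₁⁺(H)`
and `s ∈ u₁(H)`. -/
theorem statement_6 {H : Type*} [NormedAddCommGroup H] [InnerProductSpace ℂ H]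
    [CompleteSpace H] (e : HilbertBasis ℤ ℂ H) (a : H →L[ℂ] H) (ha : IsTC e a)
    (ε : ℝ) (hε : 0 < ε) :
    ∃ b s : H →L[ℂ] H, InB1 e b ∧ InU1 e s ∧ traceNorm e (a - b - s) < ε := by
  classical
  set q := sqrtAbs a with hqdef
  have hqsa : IsSelfAdjoint q := sqrtAbs_selfAdjoint a
  have hqadj : adjoint q = q := hqsa.adjoint_eq
  have hqq : ∀ x : H, q (q x) = absCLM a x := sqrtAbs_apply_self a
  have hS : Summable (fun n : ℤ => ‖q (e n)‖^2) := by
    have h2 : Summable (fun n : ℤ => (inner ℂ (e n) (absCLM a (e n)) : ℂ).re) := ha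
    have h1 : (fun n : ℤ => (inner ℂ (e n) (absCLM a (e n)) : ℂ).re)
        = fun n : ℤ => ‖q (e n)‖^2 := funext fun n => traceNorm_term e a n
    rw [h1] at h2
    exact h2
  set S := ∑' n : ℤ, ‖q (e n)‖^2 with hSdef
  have hS0 : 0 ≤ S := tsum_nonneg fun n => sq_nonneg _
  obtain ⟨u, hu1, hu2, hu3⟩ := exists_polar a
  have hu_pt : ∀ x : H, ‖u x‖ ≤ ‖x‖ := fun x =>
    (u.le_opNorm x).trans (mul_le_of_le_one_left (norm_nonneg x) hu1)
  set δ := ε / (2 * (S + 1)) with hδdef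
  have hδ : 0 < δ := by positivity
  -- choice of the finite window F
  have hite0 : ∀ (F : Finset ℤ) (n : ℤ), 0 ≤ (if n ∈ F then (0:ℝ) else ‖q (e n)‖^2) := by
    intro F n; split <;> positivity
  have hitele : ∀ (F : Finset ℤ) (n : ℤ),
      (if n ∈ F then (0:ℝ) else ‖q (e n)‖^2) ≤ ‖q (e n)‖^2 := by
    intro F n
    split
    · positivity
    · exact le_rfl
  have hf0 : ∀ (F : Finset ℤ) (n : ℤ), 0 ≤ ‖u (q (e n)) - projF e F (u (q (e n)))‖^2
      + (if n ∈ F then (0:ℝ) else ‖q (e n)‖^2) :=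
    fun F n => add_nonneg (sq_nonneg _) (hite0 F n)
  have hconv : Filter.Tendsto (fun F : Finset ℤ => ∑' n : ℤ,
      (‖u (q (e n)) - projF e F (u (q (e n)))‖^2 + (if n ∈ F then (0:ℝ) else ‖q (e n)‖^2)))
      Filter.atTop (nhds 0) := by
    have hconv0 : Filter.Tendsto (fun F : Finset ℤ => ∑' n : ℤ,
        (‖u (q (e n)) - projF e F (u (q (e n)))‖^2 + (if n ∈ F then (0:ℝ) else ‖q (e n)‖^2)))
        Filter.atTop (nhds (∑' _ : ℤ, (0:ℝ))) := by
      refine tendsto_tsum_of_dominated_convergence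
        (bound := fun n : ℤ => ‖q (e n)‖^2 + ‖q (e n)‖^2) (hS.add hS) ?_ ?_
      · intro k
        have t1 : Filter.Tendsto (fun F : Finset ℤ => ‖u (q (e k)) - projF e F (u (q (e k)))‖^2)
            Filter.atTop (nhds 0) := by
          have h2 := (tendsto_projF e (u (q (e k)))).pow 2
          simpa using h2
        have t2 : Filter.Tendsto (fun F : Finset ℤ => if k ∈ F then (0:ℝ) else ‖q (e k)‖^2)
            Filter.atTop (nhds 0) := by
          have hev : (fun _ : Finset ℤ => (0:ℝ)) =ᶠ[Filter.atTop]
              (fun F : Finset ℤ => if k ∈ F then (0:ℝ) else ‖q (e k)‖^2) := by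
            filter_upwards [Filter.eventually_ge_atTop ({k} : Finset ℤ)] with F hF
            have hk : k ∈ F := hF (Finset.mem_singleton_self k)
            rw [if_pos hk]
          exact Filter.Tendsto.congr' hev tendsto_const_nhds
        simpa using t1.add t2
      · refine Filter.Eventually.of_forall fun F => fun k => ?_
        have hb1 : ‖u (q (e k)) - projF e F (u (q (e k)))‖ ≤ ‖q (e k)‖ :=
          (norm_sub_projF_le e F _).trans (hu_pt _)
        have hb1' : ‖u (q (e k)) - projF e F (u (q (e k)))‖^2 ≤ ‖q (e k)‖^2 := by
          nlinarith [norm_nonneg (u (q (e k)) - projF e F (u (q (e k))))]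
        rw [Real.norm_eq_abs, abs_of_nonneg (hf0 F k)]
        exact add_le_add hb1' (hitele F k)
    simpa using hconv0
  have hηpos : 0 < δ * ε / 2 := by positivity
  obtain ⟨F, hF⟩ := ((tendsto_order.1 hconv).2 (δ * ε / 2) hηpos).exists
  have hF' : (∑' n : ℤ,
      (‖u (q (e n)) - projF e F (u (q (e n)))‖^2 + (if n ∈ F then (0:ℝ) else ‖q (e n)‖^2)))
      < δ * ε / 2 := hF
  -- the matrices
  set Am : ℤ → ℤ → ℂ := fun i j => (inner ℂ (e i) (a (e j)) : ℂ) with hAm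
  set β : ℤ → ℤ → ℂ := fun i j =>
    if j < i then Am i j + (starRingEnd ℂ) (Am j i)
    else if i = j then ((Am i i).re : ℂ) else 0 with hβ
  set σ : ℤ → ℤ → ℂ := fun i j => Am i j - β i j with hσ
  set b := matOp e F β with hb
  set s := matOp e F σ with hs
  refine ⟨b, s, ⟨?_, ?_, ?_⟩, ⟨?_, ?_⟩, ?_⟩
  · exact isTC_of_cols e b F fun n hn => matOp_col_zero e F β n hn
  · intro m n hmn
    rw [hb, matOp_entry]
    have hβ0 : β m n = 0 := by
      rw [hβ]
      dsimp only
      rw [if_neg (by omega), if_neg (by omega)]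
    split <;> simp [hβ0]
  · intro n
    rw [hb, matOp_entry]
    by_cases hn : n ∈ F
    · rw [if_pos ⟨hn, hn⟩]
      have hβn : β n n = ((Am n n).re : ℂ) := by
        rw [hβ]
        dsimp only
        rw [if_neg (by omega), if_pos rfl]
      rw [hβn]
      exact Complex.ofReal_im _
    · rw [if_neg (by tauto)]
      rfl
  · exact isTC_of_cols e s F fun n hn => matOp_col_zero e F σ n hn
  · show star s = -s
    rw [star_eq_adjoint, hs, matOp_adjoint]
    have hσc : (fun i j : ℤ => (starRingEnd ℂ) (σ j i)) = fun i j : ℤ => -(σ i j) := by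
      funext i j
      rcases lt_trichotomy i j with h | h | h
      · have hβij : β i j = 0 := by
          rw [hβ]; dsimp only; rw [if_neg (by omega), if_neg (by omega)]
        have hβji : β j i = Am j i + (starRingEnd ℂ) (Am i j) := by
          rw [hβ]; dsimp only; rw [if_pos h]
        simp only [hσ, hβij, hβji, map_sub, map_add, Complex.conj_conj, sub_zero]
        ring
      · subst h
        have hβii : β i i = ((Am i i).re : ℂ) := by
          rw [hβ]; dsimp only; rw [if_neg (by omega), if_pos rfl]
        simp only [hσ, hβii, map_sub, Complex.conj_ofReal]
        have hc := Complex.add_conj (Am i i)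
        push_cast at hc ⊢
        linear_combination hc
      · have hβij : β i j = Am i j + (starRingEnd ℂ) (Am j i) := by
          rw [hβ]; dsimp only; rw [if_pos h]
        have hβji : β j i = 0 := by
          rw [hβ]; dsimp only; rw [if_neg (by omega), if_neg (by omega)]
        simp only [hσ, hβij, hβji, map_sub, map_add, Complex.conj_conj, sub_zero]
        ring
    rw [hσc, matOp_neg]
  · -- the trace-norm estimate
    obtain ⟨V, hV1, hV2, hV3⟩ := exists_polar (a - b - s)
    set r := a - b - s with hr
    have hVadj : ∀ x : H, ‖adjoint V x‖ ≤ ‖x‖ := by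
      intro x
      have h1 : ‖adjoint V‖ = ‖V‖ := LinearIsometryEquiv.norm_map adjoint V
      calc ‖adjoint V x‖ ≤ ‖adjoint V‖ * ‖x‖ := le_opNorm _ x
      _ ≤ ‖x‖ := by rw [h1]; exact mul_le_of_le_one_left (norm_nonneg x) hV1
    have ha2 : ∀ x : H, a x = u (q (q x)) := fun x => by rw [hqq, hu2]
    have hrcol : ∀ n : ℤ, r (e n)
        = a (e n) - (if n ∈ F then projF e F (a (e n)) else 0) := by
      intro n
      have h1 : r (e n) = a (e n) - (b (e n) + s (e n)) := by
        rw [hr]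
        simp only [ContinuousLinearMap.sub_apply]
        abel
      have h2 : b (e n) + s (e n) = if n ∈ F then projF e F (a (e n)) else 0 := by
        rw [hb, hs, matOp_basis, matOp_basis]
        by_cases hn : n ∈ F
        · rw [if_pos hn, if_pos hn, if_pos hn, ← Finset.sum_add_distrib, projF_apply]
          refine Finset.sum_congr rfl fun i _ => ?_
          rw [← add_smul]
          congr 1
          simp only [hσ, hAm]
          ring
        · rw [if_neg hn, if_neg hn, if_neg hn, add_zero]
      rw [h1, h2]
    set X := q ∘L ((adjoint u) ∘L ((ContinuousLinearMap.id ℂ H - projF e F) ∘L V)) with hX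
    set Y := q ∘L ((adjoint u) ∘L V) with hY
    have htt : ∀ n : ℤ, (inner ℂ (e n) (absCLM r (e n)) : ℂ).re = ‖sqrtAbs r (e n)‖^2 :=
      fun n => traceNorm_term e r n
    have ht0 : ∀ n : ℤ, 0 ≤ (inner ℂ (e n) (absCLM r (e n)) : ℂ).re :=
      fun n => by rw [htt n]; positivity
    have hXapp : ∀ n : ℤ, X (e n) = q (adjoint u (V (e n) - projF e F (V (e n)))) := by
      intro n
      rw [hX]
      simp only [ContinuousLinearMap.comp_apply, ContinuousLinearMap.sub_apply,
        ContinuousLinearMap.id_apply]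
    have hYapp : ∀ n : ℤ, Y (e n) = q (adjoint u (V (e n))) := by
      intro n
      rw [hY]
      simp only [ContinuousLinearMap.comp_apply]
    have hkey : ∀ n : ℤ, (inner ℂ (e n) (absCLM r (e n)) : ℂ).re
        = if n ∈ F then (⟪X (e n), q (e n)⟫:ℂ).re else (⟪Y (e n), q (e n)⟫:ℂ).re := by
      intro n
      have h1 : (⟪e n, absCLM r (e n)⟫:ℂ) = ⟪V (e n), r (e n)⟫ := by
        rw [← hV3 (e n)]
        exact adjoint_inner_right V (e n) (r (e n))
      by_cases hn : n ∈ F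
      · rw [if_pos hn]
        congr 1
        rw [h1, hrcol n, if_pos hn]
        calc (⟪V (e n), a (e n) - projF e F (a (e n))⟫:ℂ)
            = ⟪V (e n), a (e n)⟫ - ⟪V (e n), projF e F (a (e n))⟫ := inner_sub_right _ _ _
          _ = ⟪V (e n), a (e n)⟫ - ⟪projF e F (V (e n)), a (e n)⟫ := by
              rw [inner_projF e F (V (e n)) (a (e n))]
          _ = ⟪V (e n) - projF e F (V (e n)), a (e n)⟫ := (inner_sub_left _ _ _).symm
          _ = ⟪V (e n) - projF e F (V (e n)), u (q (q (e n)))⟫ := by rw [← ha2]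
          _ = ⟪adjoint u (V (e n) - projF e F (V (e n))), q (q (e n))⟫ :=
              (adjoint_inner_left u (q (q (e n))) _).symm
          _ = ⟪X (e n), q (e n)⟫ := by rw [hXapp n, ← inner_sa hqsa]
      · rw [if_neg hn]
        congr 1
        rw [h1, hrcol n, if_neg hn, sub_zero]
        calc (⟪V (e n), a (e n)⟫:ℂ)
            = ⟪V (e n), u (q (q (e n)))⟫ := by rw [← ha2]
          _ = ⟪adjoint u (V (e n)), q (q (e n))⟫ := (adjoint_inner_left u (q (q (e n))) _).symm
          _ = ⟪Y (e n), q (e n)⟫ := by rw [hYapp n, ← inner_sa hqsa]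
    have hPadj : adjoint (ContinuousLinearMap.id ℂ H - projF e F)
        = ContinuousLinearMap.id ℂ H - projF e F := by
      rw [map_sub, adjoint_id, (projF_selfAdjoint e F).adjoint_eq]
    have hXadjapp : ∀ nn : ℤ,
        ‖adjoint X (e nn)‖ ≤ ‖u (q (e nn)) - projF e F (u (q (e nn)))‖ := by
      intro nn
      have h1 : adjoint X (e nn) = adjoint V (u (q (e nn)) - projF e F (u (q (e nn)))) := by
        rw [hX, adjoint_comp, adjoint_comp, adjoint_comp, adjoint_adjoint, hPadj, hqadj]
        simp only [ContinuousLinearMap.comp_apply, ContinuousLinearMap.sub_apply,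
          ContinuousLinearMap.id_apply]
      rw [h1]
      exact hVadj _
    have hg0 : ∀ n : ℤ, 0 ≤ ‖u (q (e n)) - projF e F (u (q (e n)))‖ := fun n => norm_nonneg _
    have hgle : ∀ n : ℤ, ‖u (q (e n)) - projF e F (u (q (e n)))‖ ≤ ‖q (e n)‖ :=
      fun n => (norm_sub_projF_le e F _).trans (hu_pt _)
    have hgsum : Summable (fun n : ℤ => ‖u (q (e n)) - projF e F (u (q (e n)))‖^2) :=
      Summable.of_nonneg_of_le (fun n => sq_nonneg _)
        (fun n => by nlinarith [hg0 n, hgle n, norm_nonneg (q (e n))]) hS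
    obtain ⟨hXsum, hXle⟩ := col_bound e X (fun n => ‖u (q (e n)) - projF e F (u (q (e n)))‖)
      hg0 hXadjapp hgsum
    have hXle' : (∑' n : ℤ, ‖X (e n)‖^2)
        ≤ ∑' n : ℤ, ‖u (q (e n)) - projF e F (u (q (e n)))‖^2 := hXle
    have hYadjapp : ∀ nn : ℤ, ‖adjoint Y (e nn)‖ ≤ ‖q (e nn)‖ := by
      intro nn
      have h1 : adjoint Y (e nn) = adjoint V (u (q (e nn))) := by
        rw [hY, adjoint_comp, adjoint_comp, adjoint_adjoint, hqadj]
        simp only [ContinuousLinearMap.comp_apply]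
      rw [h1]
      exact (hVadj _).trans (hu_pt _)
    obtain ⟨hYsum, hYle⟩ := col_bound e Y (fun n => ‖q (e n)‖) (fun n => norm_nonneg _)
      hYadjapp hS
    have hYle' : (∑' n : ℤ, ‖Y (e n)‖^2) ≤ S := hYle
    have hitesum : Summable (fun n : ℤ => if n ∈ F then (0:ℝ) else ‖q (e n)‖^2) :=
      Summable.of_nonneg_of_le (hite0 F) (hitele F) hS
    have hMsum2 : Summable (fun n : ℤ => δ/2*‖q (e n)‖^2 + δ/2*‖Y (e n)‖^2) :=
      (hS.mul_left _).add (hYsum.mul_left _)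
    have hMsum1 : Summable (fun n : ℤ => (if n ∈ F then (0:ℝ) else ‖q (e n)‖^2)/(2*δ)
        + (δ/2*‖q (e n)‖^2 + δ/2*‖Y (e n)‖^2)) := (hitesum.div_const _).add hMsum2
    have hMsum : Summable (fun n : ℤ => ‖X (e n)‖^2/(2*δ)
        + ((if n ∈ F then (0:ℝ) else ‖q (e n)‖^2)/(2*δ)
          + (δ/2*‖q (e n)‖^2 + δ/2*‖Y (e n)‖^2))) := (hXsum.div_const _).add hMsum1
    have htM : ∀ n : ℤ, (inner ℂ (e n) (absCLM r (e n)) : ℂ).re ≤ ‖X (e n)‖^2/(2*δ)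
        + ((if n ∈ F then (0:ℝ) else ‖q (e n)‖^2)/(2*δ)
          + (δ/2*‖q (e n)‖^2 + δ/2*‖Y (e n)‖^2)) := by
      intro n
      rw [hkey n]
      by_cases hn : n ∈ F
      · rw [if_pos hn, if_pos hn]
        have h1 : (⟪X (e n), q (e n)⟫:ℂ).re ≤ ‖X (e n)‖ * ‖q (e n)‖ := re_inner_le_norm' _ _
        have h2 : ‖X (e n)‖ * ‖q (e n)‖ ≤ ‖X (e n)‖^2/(2*δ) + δ/2*‖q (e n)‖^2 := amgm hδ _ _
        have h4 : 0 ≤ δ/2*‖Y (e n)‖^2 := by positivity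
        have h5 : (0:ℝ)/(2*δ) = 0 := by simp
        rw [h5]
        linarith
      · rw [if_neg hn, if_neg hn]
        have h1 : (⟪Y (e n), q (e n)⟫:ℂ).re ≤ ‖q (e n)‖ * ‖Y (e n)‖ := by
          have h0 := re_inner_le_norm' (Y (e n)) (q (e n))
          nlinarith [h0]
        have h2 : ‖q (e n)‖ * ‖Y (e n)‖ ≤ ‖q (e n)‖^2/(2*δ) + δ/2*‖Y (e n)‖^2 := amgm hδ _ _
        have h4 : 0 ≤ ‖X (e n)‖^2/(2*δ) := by positivity
        have h5 : 0 ≤ δ/2*‖q (e n)‖^2 := by positivity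
        linarith
    have htsum : Summable (fun n : ℤ => (inner ℂ (e n) (absCLM r (e n)) : ℂ).re) :=
      Summable.of_nonneg_of_le ht0 htM hMsum
    have hle : (∑' n : ℤ, (inner ℂ (e n) (absCLM r (e n)) : ℂ).re)
        ≤ ∑' n : ℤ, (‖X (e n)‖^2/(2*δ)
          + ((if n ∈ F then (0:ℝ) else ‖q (e n)‖^2)/(2*δ)
            + (δ/2*‖q (e n)‖^2 + δ/2*‖Y (e n)‖^2))) := Summable.tsum_le_tsum htM htsum hMsum
    have hMsplit : (∑' n : ℤ, (‖X (e n)‖^2/(2*δ)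
          + ((if n ∈ F then (0:ℝ) else ‖q (e n)‖^2)/(2*δ)
            + (δ/2*‖q (e n)‖^2 + δ/2*‖Y (e n)‖^2))))
        = (∑' n : ℤ, ‖X (e n)‖^2)/(2*δ)
          + ((∑' n : ℤ, (if n ∈ F then (0:ℝ) else ‖q (e n)‖^2))/(2*δ)
            + (δ/2*S + δ/2*(∑' n : ℤ, ‖Y (e n)‖^2))) := by
      rw [Summable.tsum_add (hXsum.div_const _) hMsum1,
        Summable.tsum_add (hitesum.div_const _) hMsum2,
        Summable.tsum_add (hS.mul_left _) (hYsum.mul_left _),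
        tsum_div_const, tsum_div_const, tsum_mul_left, tsum_mul_left, hSdef]
    have hηb : (∑' n : ℤ, ‖u (q (e n)) - projF e F (u (q (e n)))‖^2)
        + (∑' n : ℤ, (if n ∈ F then (0:ℝ) else ‖q (e n)‖^2)) < δ*ε/2 := by
      rw [← Summable.tsum_add hgsum hitesum]
      exact hF'
    have hXite : (∑' n : ℤ, ‖X (e n)‖^2)
        + (∑' n : ℤ, (if n ∈ F then (0:ℝ) else ‖q (e n)‖^2)) < δ*ε/2 := by linarith
    have hA : ((∑' n : ℤ, ‖X (e n)‖^2)
        + (∑' n : ℤ, (if n ∈ F then (0:ℝ) else ‖q (e n)‖^2)))/(2*δ) < ε/4 := by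
      rw [div_lt_iff₀ (by positivity)]
      calc (∑' n : ℤ, ‖X (e n)‖^2) + (∑' n : ℤ, (if n ∈ F then (0:ℝ) else ‖q (e n)‖^2))
          < δ*ε/2 := hXite
      _ = ε/4*(2*δ) := by ring
    have hB : δ/2*S + δ/2*(∑' n : ℤ, ‖Y (e n)‖^2) ≤ δ*S := by nlinarith
    have hδS : δ*S ≤ ε/2 := by
      rw [hδdef, div_mul_eq_mul_div, div_le_div_iff₀ (by positivity) (by norm_num)]
      nlinarith
    have hXn0 : 0 ≤ ∑' n : ℤ, ‖X (e n)‖^2 := tsum_nonneg fun n => sq_nonneg _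
    have hiten0 : 0 ≤ ∑' n : ℤ, (if n ∈ F then (0:ℝ) else ‖q (e n)‖^2) :=
      tsum_nonneg (hite0 F)
    have hfinal : traceNorm e r = ∑' n : ℤ, (inner ℂ (e n) (absCLM r (e n)) : ℂ).re := rfl
    calc traceNorm e r = ∑' n : ℤ, (inner ℂ (e n) (absCLM r (e n)) : ℂ).re := hfinal
      _ ≤ ∑' n : ℤ, (‖X (e n)‖^2/(2*δ)
          + ((if n ∈ F then (0:ℝ) else ‖q (e n)‖^2)/(2*δ)
            + (δ/2*‖q (e n)‖^2 + δ/2*‖Y (e n)‖^2))) := hle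
      _ = (∑' n : ℤ, ‖X (e n)‖^2)/(2*δ)
          + ((∑' n : ℤ, (if n ∈ F then (0:ℝ) else ‖q (e n)‖^2))/(2*δ)
            + (δ/2*S + δ/2*(∑' n : ℤ, ‖Y (e n)‖^2))) := hMsplit
      _ < ε := by
          have hs1 : (∑' n : ℤ, ‖X (e n)‖^2)/(2*δ)
              + (∑' n : ℤ, (if n ∈ F then (0:ℝ) else ‖q (e n)‖^2))/(2*δ)
              = ((∑' n : ℤ, ‖X (e n)‖^2)
                + (∑' n : ℤ, (if n ∈ F then (0:ℝ) else ‖q (e n)‖^2)))/(2*δ) := by ring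
          linarith



end Aux

end PL
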